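/- Define the generalized Péter–Ackermann function A^n_f : ℕ^{n+1} → ℕ (relativized to f : ℕ → ℕ) by well-founded recursion on the ordinal α(x⃗) = ω^{n-1}·x₁ + ⋯ + ω·x_{n-1} + x_n paired lexicographically with y: A^n_f(x⃗,y) = f(y) if α(x⃗)=0; A^n_f(x⃗', y) if α(x⃗) is a limit and α(x⃗') = α(x⃗)[y]; A^n_f(x⃗−1, 1) if α(x⃗) is a successor and y = 0; and A^n_f(x⃗−1, A^n_f(x⃗, y−1)) if α(x⃗) is a successor and y > 0. Then A^n_f(x⃗, y) = F_{α(x⃗), f}(y), the fast-growing hierarchy relative to f at ordinal α(x⃗) < ω^n. -/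

import Mathlib

open Ordinal

/-- One step `K_f` of the canonical computation of the fast-growing hierarchy
relative to `f`, on a stack of ordinal notations below `ε₀` (head = topmost
entry `α_n`) together with a natural number argument:
`K_f(α₀…α_n, x) = (α₀…α_{n-1}, f(x))` if `α_n = 0`;
`(α₀…α_{n-1} β…β (x+1 copies), 1)` if `α_n = β+1`;
`(α₀…α_{n-1} α_n[x], x)` if `α_n` is a limit; and `K_f(⟨⟩, x) = (⟨⟩, x)`. -/
def Kstep (f : ℕ → ℕ) : List ONote × ℕ → List ONote × ℕ
  | ([], x) => ([], x)
  | (α :: rest, x) =>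
    match α.fundamentalSequence with
    | Sum.inl none => (rest, f x)
    | Sum.inl (some β) => (List.replicate (x + 1) β ++ rest, 1)
    | Sum.inr g => (g x :: rest, x)

/-- The ordinal `h(α₀…α_n, x) = ω^{α₀} + ⋯ + ω^{α_n}` associated to a stack
(head of the list is the topmost entry `α_n`); `h(⟨⟩, x) = 0`. -/
noncomputable def hOrd (σ : List ONote) : Ordinal.{0} :=
  σ.foldr (fun α acc => acc + omega0 ^ α.repr) 0

/-- `F_{α,f}(x) = y`: the iteration of the one-step computation `K_f` starting
from `(⟨α⟩, x)` reaches the empty stack with value `y`. -/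
def Fval (f : ℕ → ℕ) (α : ONote) (x y : ℕ) : Prop :=
  ∃ l : ℕ, (Kstep f)^[l] ([α], x) = ([], y)

/-- The ordinal notation `α(x⃗) = ω^{n-1}·x₁ + ⋯ + ω·x_{n-1} + x_n < ω^n`
associated to a tuple `x⃗ ∈ ℕ^n` (here `n = m + 1 > 0`). -/
def alphaVec {m : ℕ} (x : Fin (m + 1) → ℕ) : ONote :=
  (List.ofFn fun i : Fin (m + 1) =>
    (ONote.omega ^ (ONote.ofNat (m - (i : ℕ))) * ONote.ofNat (x i))).sum

/-- Decrement the last coordinate of a tuple: `x⃗ − 1`. -/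
def decLast {m : ℕ} (x : Fin (m + 1) → ℕ) : Fin (m + 1) → ℕ :=
  Function.update x (Fin.last m) (x (Fin.last m) - 1)

lemma split_omega : ONote.split ONote.omega = (ONote.omega, 0) := rfl
lemma split_ofNat_succ (j : ℕ) : ONote.split (ONote.ofNat (j+1)) = (0, j+1) := rfl
lemma mulNat_one_pnat (j : ℕ) : ONote.mulNat 1 j = ONote.ofNat j := by
  cases j with
  | zero => rfl
  | succ i => show ONote.oadd 0 (1 * i.succPNat) 0 = _; rw [one_mul]; rfl
lemma ofNat_add_one (j : ℕ) : ONote.ofNat j + 1 = ONote.ofNat (j+1) := by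
  cases j with
  | zero => rfl
  | succ i => rfl
lemma opowAux_zero (e a0 a : ONote) (j : ℕ) : ONote.opowAux e a0 a j 0 = 0 := by
  simp [ONote.opowAux]
lemma omega_opow_ofNat (j : ℕ) : ONote.omega ^ (ONote.ofNat j) = ONote.oadd (ONote.ofNat j) 1 0 := by
  cases j with
  | zero => rfl
  | succ j =>
    show ONote.opow _ _ = _
    rw [ONote.opow, split_omega, ONote.opowAux2.eq_def, split_ofNat_succ]
    show ONote.scale (1 * 0 + ONote.mulNat 1 j) ONote.omega + ONote.opowAux (1 * 0) 1 (ONote.mulNat ONote.omega 0) j 0 = _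
    rw [mul_zero, mulNat_one_pnat, opowAux_zero, ONote.zero_add]
    show ONote.oadd (ONote.ofNat j + 1) 1 (ONote.scale (ONote.ofNat j) 0) + 0 = _
    rw [ofNat_add_one]
    rfl
lemma omega_pow_mul_ofNat (k a : ℕ) :
    ONote.omega ^ ONote.ofNat k * ONote.ofNat (a+1) = ONote.oadd (ONote.ofNat k) a.succPNat 0 := by
  rw [omega_opow_ofNat]
  show ONote.oadd (ONote.ofNat k) 1 0 * ONote.oadd 0 a.succPNat 0 = _
  rw [ONote.oadd_mul, if_pos rfl, one_mul]
def cf : List ℕ → ONote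
  | [] => 0
  | 0 :: l => cf l
  | (a+1) :: l => ONote.oadd (ONote.ofNat l.length) a.succPNat (cf l)

lemma cf_replicate_zero (z : ℕ) : cf (List.replicate z 0) = 0 := by
  induction z with
  | zero => rfl
  | succ z ih => rw [List.replicate_succ]; exact ih

lemma cmp_ofNat_gt {j k : ℕ} (h : j < k) :
    ONote.cmp (ONote.ofNat k) (ONote.ofNat j) = Ordering.gt := by
  have hc := ONote.cmp_compares (ONote.ofNat k) (ONote.ofNat j)
  have hr : ONote.repr (ONote.ofNat j) < ONote.repr (ONote.ofNat k) := by
    rw [ONote.repr_ofNat, ONote.repr_ofNat]; exact_mod_cast h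
  cases hcmp : ONote.cmp (ONote.ofNat k) (ONote.ofNat j) <;> rw [hcmp] at hc
  · exact absurd (ONote.lt_def.1 hc) (asymm hr)
  · exact absurd (congrArg ONote.repr hc) hr.ne'

lemma cf_shape : ∀ l : List ℕ, cf l = 0 ∨
    ∃ j : ℕ, ∃ n : ℕ+, ∃ a : ONote, j < l.length ∧ cf l = ONote.oadd (ONote.ofNat j) n a := by
  intro l
  induction l with
  | nil => exact Or.inl rfl
  | cons c l ih =>
    cases c with
    | zero =>
      rcases ih with h | ⟨j, n, a, hj, he⟩
      · exact Or.inl h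
      · exact Or.inr ⟨j, n, a, Nat.lt_succ_of_lt hj, he⟩
    | succ a => exact Or.inr ⟨l.length, a.succPNat, cf l, Nat.lt_succ_self _, rfl⟩

lemma oadd_add_cf {k : ℕ} (n : ℕ+) {l : List ℕ} (h : l.length ≤ k) :
    ONote.oadd (ONote.ofNat k) n 0 + cf l = ONote.oadd (ONote.ofNat k) n (cf l) := by
  rw [ONote.oadd_add, ONote.zero_add]
  rcases cf_shape l with h0 | ⟨j, n', a, hj, he⟩
  · rw [h0]; rfl
  · rw [he, ONote.addAux, cmp_ofNat_gt (lt_of_lt_of_le hj h)]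

def v2o : List ℕ → ONote
  | [] => 0
  | a :: l => ONote.omega ^ ONote.ofNat l.length * ONote.ofNat a + v2o l

lemma v2o_eq_cf : ∀ l, v2o l = cf l
  | [] => rfl
  | 0 :: l => by
    show ONote.omega ^ ONote.ofNat l.length * ONote.ofNat 0 + v2o l = cf l
    rw [ONote.ofNat_zero, mul_zero, ONote.zero_add, v2o_eq_cf l]
  | (a+1) :: l => by
    show ONote.omega ^ ONote.ofNat l.length * ONote.ofNat (a+1) + v2o l = cf ((a+1) :: l)
    rw [omega_pow_mul_ofNat, v2o_eq_cf l, oadd_add_cf _ (le_refl _)]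
    rfl

lemma sum_ofFn : ∀ (n : ℕ) (x : Fin n → ℕ),
    (List.ofFn fun i : Fin n =>
      ONote.omega ^ ONote.ofNat (n - 1 - (i : ℕ)) * ONote.ofNat (x i)).sum = v2o (List.ofFn x)
  | 0, x => by simp [v2o]
  | n+1, x => by
    rw [List.ofFn_succ, List.ofFn_succ (f := x), List.sum_cons]
    show _ + _ = v2o _
    rw [v2o]
    congr 1
    · simp
    · rw [← sum_ofFn n (fun i => x i.succ)]
      refine congrArg List.sum (congrArg List.ofFn (funext fun i => ?_))
      have h : n + 1 - 1 - ((i.succ : Fin (n+1)) : ℕ) = n - 1 - (i : ℕ) := by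
        rw [Fin.val_succ]; omega
      rw [h]

lemma alphaVec_eq {m : ℕ} (x : Fin (m+1) → ℕ) : alphaVec x = cf (List.ofFn x) := by
  rw [alphaVec, ← v2o_eq_cf, ← sum_ofFn]
  congr 1

lemma fs_oadd_some {e b b' : ONote} {n : ℕ+} (h : b.fundamentalSequence = Sum.inl (some b')) :
    (ONote.oadd e n b).fundamentalSequence = Sum.inl (some (ONote.oadd e n b')) := by
  rw [ONote.fundamentalSequence, h]

lemma fs_oadd_inr {e b : ONote} {n : ℕ+} {f : ℕ → ONote} (h : b.fundamentalSequence = Sum.inr f) :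
    (ONote.oadd e n b).fundamentalSequence = Sum.inr (fun i => ONote.oadd e n (f i)) := by
  rw [ONote.fundamentalSequence, h]

lemma fs_ofNat_succ (k : ℕ) :
    (ONote.ofNat (k+1)).fundamentalSequence = Sum.inl (some (ONote.ofNat k)) := by
  cases k with | zero => rfl | succ j => rfl

lemma fs_lim_base1 (z : ℕ) :
    (ONote.oadd (ONote.ofNat (z+1)) (Nat.succPNat 0) 0).fundamentalSequence =
      Sum.inr (fun i => ONote.oadd (ONote.ofNat z) i.succPNat 0) := by
  rw [ONote.fundamentalSequence, fs_ofNat_succ]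
  rfl

lemma fs_lim_base2 (z c : ℕ) :
    (ONote.oadd (ONote.ofNat (z+1)) (c+1).succPNat 0).fundamentalSequence =
      Sum.inr (fun i => ONote.oadd (ONote.ofNat (z+1)) c.succPNat
        (ONote.oadd (ONote.ofNat z) i.succPNat 0)) := by
  rw [ONote.fundamentalSequence, fs_ofNat_succ]
  rfl

lemma fs_succ_base (a : ℕ) :
    (ONote.oadd 0 (a+1).succPNat 0).fundamentalSequence =
      Sum.inl (some (ONote.oadd 0 a.succPNat 0)) := by
  rw [ONote.fundamentalSequence]
  rfl

lemma cf_single_cons (a z : ℕ) :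
    cf ((a+1) :: List.replicate z 0) = ONote.oadd (ONote.ofNat z) a.succPNat 0 := by
  show ONote.oadd (ONote.ofNat (List.replicate z 0).length) a.succPNat (cf (List.replicate z 0)) = _
  rw [cf_replicate_zero, List.length_replicate]

lemma cf_two (c i z : ℕ) :
    cf ((c+1) :: (i+1) :: List.replicate z 0) =
      ONote.oadd (ONote.ofNat (z+1)) c.succPNat (ONote.oadd (ONote.ofNat z) i.succPNat 0) := by
  show ONote.oadd (ONote.ofNat ((i+1) :: List.replicate z 0).length) c.succPNat
    (cf ((i+1) :: List.replicate z 0)) = _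
  rw [cf_single_cons, List.length_cons, List.length_replicate]

lemma fs_cf_succ_base (a : ℕ) : (cf [a+1]).fundamentalSequence = Sum.inl (some (cf [a])) := by
  cases a with
  | zero => rfl
  | succ b => exact fs_succ_base b

lemma fs_cf_lim_base (b z : ℕ) :
    (cf ((b+1) :: List.replicate (z+1) 0)).fundamentalSequence =
      Sum.inr (fun i => cf (b :: (i+1) :: List.replicate z 0)) := by
  rw [cf_single_cons]
  cases b with
  | zero =>
    rw [fs_lim_base1]
    refine congrArg Sum.inr (funext fun i => ?_)
    show _ = cf ((i+1) :: List.replicate z 0)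
    rw [cf_single_cons]
  | succ c =>
    rw [fs_lim_base2]
    refine congrArg Sum.inr (funext fun i => ?_)
    show _ = cf ((c+1) :: (i+1) :: List.replicate z 0)
    rw [cf_two]

lemma fs_cf_append_succ : ∀ (p : List ℕ) {t t' : List ℕ}, t.length = t'.length →
    (cf t).fundamentalSequence = Sum.inl (some (cf t')) →
    (cf (p ++ t)).fundamentalSequence = Sum.inl (some (cf (p ++ t')))
  | [], _, _, _, h => h
  | 0 :: p, t, t', hl, h => by
    show (cf (p ++ t)).fundamentalSequence = Sum.inl (some (cf (p ++ t')))
    exact fs_cf_append_succ p hl h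
  | (c+1) :: p, t, t', hl, h => by
    have ih := fs_cf_append_succ p hl h
    show (ONote.oadd (ONote.ofNat (p ++ t).length) c.succPNat (cf (p ++ t))).fundamentalSequence
      = Sum.inl (some (ONote.oadd (ONote.ofNat (p ++ t').length) c.succPNat (cf (p ++ t'))))
    rw [fs_oadd_some ih]
    have hle : (p ++ t).length = (p ++ t').length := by simp [hl]
    rw [hle]

lemma fs_cf_append_inr : ∀ (p : List ℕ) {t : List ℕ} {g : ℕ → List ℕ},
    (∀ i, (g i).length = t.length) →
    (cf t).fundamentalSequence = Sum.inr (fun i => cf (g i)) →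
    (cf (p ++ t)).fundamentalSequence = Sum.inr (fun i => cf (p ++ g i))
  | [], _, _, _, h => h
  | 0 :: p, t, g, hl, h => by
    show (cf (p ++ t)).fundamentalSequence = Sum.inr (fun i => cf (p ++ g i))
    exact fs_cf_append_inr p hl h
  | (c+1) :: p, t, g, hl, h => by
    have ih := fs_cf_append_inr p hl h
    show (ONote.oadd (ONote.ofNat (p ++ t).length) c.succPNat (cf (p ++ t))).fundamentalSequence
      = Sum.inr fun i => cf ((c+1) :: (p ++ g i))
    rw [fs_oadd_inr ih]
    refine congrArg Sum.inr (funext fun i => ?_)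
    show _ = ONote.oadd (ONote.ofNat (p ++ g i).length) c.succPNat (cf (p ++ g i))
    have hle : (p ++ t).length = (p ++ g i).length := by simp [hl i]
    rw [hle]

lemma list_tri : ∀ l : List ℕ, (∀ a ∈ l, a = 0) ∨ (∃ p a, l = p ++ [a+1]) ∨
    ∃ p b z, l = p ++ (b+1) :: List.replicate (z+1) 0 := by
  intro l
  induction l using List.reverseRecOn with
  | nil => left; simp
  | append_singleton l c ih =>
    cases c with
    | succ a => exact Or.inr (Or.inl ⟨l, a, rfl⟩)
    | zero =>
      rcases ih with h | ⟨p, a, rfl⟩ | ⟨p, b, z, rfl⟩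
      · left
        intro a ha
        rcases List.mem_append.1 ha with h1 | h1
        · exact h a h1
        · simpa using h1
      · refine Or.inr (Or.inr ⟨p, a, 0, ?_⟩)
        simp
      · refine Or.inr (Or.inr ⟨p, b, z+1, ?_⟩)
        simp [List.replicate_succ']

section machine
variable (f : ℕ → ℕ)

lemma Kstep_fs_zero {α : ONote} {rest x} (h : α.fundamentalSequence = Sum.inl none) :
    Kstep f (α :: rest, x) = (rest, f x) := by
  simp [Kstep, h]

lemma Kstep_fs_succ {α β : ONote} {rest x} (h : α.fundamentalSequence = Sum.inl (some β)) :
    Kstep f (α :: rest, x) = (List.replicate (x + 1) β ++ rest, 1) := by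
  simp [Kstep, h]

lemma Kstep_fs_lim {α : ONote} {g rest x} (h : α.fundamentalSequence = Sum.inr g) :
    Kstep f (α :: rest, x) = (g x :: rest, x) := by
  simp [Kstep, h]

lemma Kstep_nil (x : ℕ) : Kstep f ([], x) = ([], x) := rfl

lemma run_append : ∀ (l : ℕ) (s : List ONote) (x y : ℕ),
    (Kstep f)^[l] (s, x) = ([], y) → ∀ t, ∃ l', (Kstep f)^[l'] (s ++ t, x) = (t, y)
  | 0, s, x, y, h, t => by
    rw [Function.iterate_zero_apply] at h
    obtain ⟨h1, h2⟩ := Prod.mk.injEq .. ▸ h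
    subst h2
    rw [h1]
    exact ⟨0, by simp⟩
  | (l+1), s, x, y, h, t => by
    rw [Function.iterate_succ_apply] at h
    cases s with
    | nil =>
      rw [Kstep_nil] at h
      exact run_append l [] x y h t
    | cons α s' =>
      cases hfs : α.fundamentalSequence with
      | inl o =>
        cases o with
        | none =>
          rw [Kstep_fs_zero f hfs] at h
          obtain ⟨l', hl'⟩ := run_append l s' (f x) y h t
          exact ⟨l' + 1, by
            rw [Function.iterate_succ_apply, List.cons_append, Kstep_fs_zero f hfs]
            exact hl'⟩
        | some β =>
          rw [Kstep_fs_succ f hfs] at h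
          obtain ⟨l', hl'⟩ := run_append l _ 1 y h t
          exact ⟨l' + 1, by
            rw [Function.iterate_succ_apply, List.cons_append, Kstep_fs_succ f hfs,
              ← List.append_assoc]
            exact hl'⟩
      | inr g =>
        rw [Kstep_fs_lim f hfs] at h
        obtain ⟨l', hl'⟩ := run_append l _ x y h t
        exact ⟨l' + 1, by
          rw [Function.iterate_succ_apply, List.cons_append, Kstep_fs_lim f hfs]
          exact hl'⟩

lemma run_stack {B : ℕ → ℕ} {β : ONote} (hB : ∀ z, Fval f β z (B z)) :
    ∀ (k : ℕ) (t : List ONote) (z : ℕ),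
      ∃ l, (Kstep f)^[l] (List.replicate k β ++ t, z) = (t, B^[k] z)
  | 0, t, z => ⟨0, by simp⟩
  | (k+1), t, z => by
    obtain ⟨l₁, h₁⟩ := hB z
    obtain ⟨l₁', h₁'⟩ := run_append f l₁ [β] z (B z) h₁ (List.replicate k β ++ t)
    obtain ⟨l₂, h₂⟩ := run_stack hB k t (B z)
    refine ⟨l₂ + l₁', ?_⟩
    rw [Function.iterate_add_apply]
    rw [List.replicate_succ, List.cons_append, show (β :: (List.replicate k β ++ t)) = [β] ++ (List.replicate k β ++ t) from rfl]
    rw [h₁', h₂, Function.iterate_succ_apply]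

end machine

lemma ofFn_split {m : ℕ} (x : Fin (m+1) → ℕ) :
    List.ofFn x = (List.ofFn fun i : Fin m => x i.castSucc) ++ [x (Fin.last m)] := by
  rw [List.ofFn_succ' x, List.concat_eq_append]

lemma ofFn_decLast {m : ℕ} (x : Fin (m+1) → ℕ) :
    List.ofFn (decLast x) = (List.ofFn fun i : Fin m => x i.castSucc) ++ [x (Fin.last m) - 1] := by
  rw [ofFn_split (decLast x)]
  congr 1
  · refine congrArg List.ofFn (funext fun i => ?_)
    show Function.update x (Fin.last m) _ i.castSucc = x i.castSucc
    rw [Function.update_of_ne (Fin.castSucc_lt_last i).ne]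
  · show [Function.update x (Fin.last m) (x (Fin.last m) - 1) (Fin.last m)] = _
    rw [Function.update_self]

lemma ofFn_of_eq {m : ℕ} {l : List ℕ} (h : l.length = m+1) :
    List.ofFn (fun i : Fin (m+1) => l.get (Fin.cast h.symm i)) = l := by
  apply List.ext_get (by simp [h])
  intro i h1 h2
  rw [List.get_ofFn]
  rfl

/-- Any function `A : ℕ^{n+1} → ℕ` satisfying the defining recursion of the
generalized Péter–Ackermann function `A^n_f` (by cases according to whether
`α(x⃗)` is zero, a limit, or a successor) agrees with the fast-growing
hierarchy: `A(x⃗, y) = F_{α(x⃗), f}(y)`. -/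
theorem stmt_18 {m : ℕ} (f : ℕ → ℕ) (A : (Fin (m + 1) → ℕ) → ℕ → ℕ)
    (h0 : ∀ x y, (∀ i, x i = 0) → A x y = f y)
    (hlim : ∀ (x x' : Fin (m + 1) → ℕ) (y : ℕ) (g : ℕ → ONote),
      (alphaVec x).fundamentalSequence = Sum.inr g → alphaVec x' = g y →
      A x y = A x' y)
    (hsucc0 : ∀ x, 0 < x (Fin.last m) → A x 0 = A (decLast x) 1)
    (hsucc : ∀ x y, 0 < x (Fin.last m) →
      A x (y + 1) = A (decLast x) (A x y)) :
    ∀ x y, Fval f (alphaVec x) y (A x y) := by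
  have main : ∀ o (x : Fin (m+1) → ℕ), ONote.repr (alphaVec x) = o →
      ∀ y, Fval f (alphaVec x) y (A x y) := by
    intro o
    induction o using Ordinal.induction with
    | h o IH =>
      intro x ho y
      rcases list_tri (List.ofFn x) with hz | ⟨p, a, hl⟩ | ⟨p, b, z, hl⟩
      · -- zero case
        have hx : ∀ i, x i = 0 := fun i => hz (x i) (by rw [List.mem_ofFn]; exact ⟨i, rfl⟩)
        have hcf : alphaVec x = 0 := by
          rw [alphaVec_eq]
          have hrep : List.ofFn x = List.replicate (m+1) 0 :=
            List.eq_replicate_iff.2 ⟨by simp, hz⟩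
          rw [hrep, cf_replicate_zero]
        rw [h0 x y hx]
        exact ⟨1, by rw [Function.iterate_one, hcf, Kstep_fs_zero f (show (0:ONote).fundamentalSequence = Sum.inl none from rfl)]⟩
      · -- successor case
        have hsplit := (ofFn_split x).symm.trans hl
        obtain ⟨hp, hlast⟩ := List.append_inj' hsplit rfl
        have hxl : x (Fin.last m) = a + 1 := by
          injection hlast with h1 _
        have hpos : 0 < x (Fin.last m) := by omega
        have hdl : List.ofFn (decLast x) = p ++ [a] := by
          rw [ofFn_decLast, hp, hxl]
          simp
        have hfs : (alphaVec x).fundamentalSequence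
            = Sum.inl (some (alphaVec (decLast x))) := by
          rw [alphaVec_eq, alphaVec_eq, hl, hdl]
          exact fs_cf_append_succ p (by simp) (fs_cf_succ_base a)
        have hprop := ONote.fundamentalSequence_has_prop (alphaVec x)
        rw [hfs] at hprop
        have hlt : ONote.repr (alphaVec (decLast x)) < o := by
          rw [← ho, hprop.1]
          exact Order.lt_succ _
        have hB : ∀ z, Fval f (alphaVec (decLast x)) z (A (decLast x) z) :=
          fun z => IH _ hlt (decLast x) rfl z
        have hval : ∀ y, A x y = (fun z => A (decLast x) z)^[y+1] 1 := by
          intro y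
          induction y with
          | zero => simpa using hsucc0 x hpos
          | succ y ihy =>
            rw [hsucc x y hpos, ihy]
            exact (Function.iterate_succ_apply' (fun z => A (decLast x) z) (y+1) 1).symm
        obtain ⟨l, hrun⟩ := run_stack f hB (y+1) [] 1
        refine ⟨l + 1, ?_⟩
        rw [Function.iterate_succ_apply, Kstep_fs_succ f hfs, hrun, hval y]
      · -- limit case
        have hfs : (alphaVec x).fundamentalSequence
            = Sum.inr (fun i => cf (p ++ b :: (i+1) :: List.replicate z 0)) := by
          rw [alphaVec_eq, hl]
          exact fs_cf_append_inr p (fun i => by simp) (fs_cf_lim_base b z)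
        have hlen : (p ++ b :: (y+1) :: List.replicate z 0).length = m + 1 := by
          have h1 := congrArg List.length hl
          simp only [List.length_ofFn, List.length_append, List.length_cons,
            List.length_replicate] at h1 ⊢
          omega
        set x' : Fin (m+1) → ℕ :=
          fun i => (p ++ b :: (y+1) :: List.replicate z 0).get (Fin.cast hlen.symm i) with hx'def
        have hax' : alphaVec x' = cf (p ++ b :: (y+1) :: List.replicate z 0) := by
          rw [alphaVec_eq, ofFn_of_eq hlen]
        have hAeq : A x y = A x' y := hlim x x' y _ hfs (by rw [hax'])
        have hprop := ONote.fundamentalSequence_has_prop (alphaVec x)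
        rw [hfs] at hprop
        have hlt : ONote.repr (alphaVec x') < o := by
          rw [← ho, hax']
          exact ONote.lt_def.1 (hprop.2.1 y).2.1
        obtain ⟨l, hrun⟩ := IH _ hlt x' rfl y
        rw [hax'] at hrun
        refine ⟨l + 1, ?_⟩
        rw [Function.iterate_succ_apply, Kstep_fs_lim f hfs, hAeq]
        exact hrun
  intro x y
  exact main _ x rfl y
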